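/- Let K be a commutative unital ring and K⟨X⟩ the free associative unital K-algebra on a countable set X. Let T be a multihomogeneous T-ideal of K⟨X⟩ (an ideal invariant under all K-algebra endomorphisms and closed under taking multihomogeneous components), and let Γ be the unital subalgebra generated by all left-normed commutators of the free generators. If T is generated as a two-sided ideal by T ∩ Γ, then T is also generated as a left ideal by T ∩ Γ. -/

import Mathlib

open scoped Classical

/-- Commutator `[a,b] = a*b - b*a`. -/
def br {R : Type*} [Ring R] (a b : R) : R := a * b - b * a

/-- The free unital associative `K`-algebra `K⟨X⟩` on countably many generators,
realized as the monoid algebra of the free monoid on `ℕ`. -/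
abbrev FreeAlg (K : Type*) [CommRing K] : Type _ := MonoidAlgebra K (FreeMonoid ℕ)

/-- The free generator `x_i`. -/
noncomputable def xgen (K : Type*) [CommRing K] (i : ℕ) : FreeAlg K :=
  MonoidAlgebra.of K (FreeMonoid ℕ) (FreeMonoid.of i)

/-- The unital subalgebra `Γ` generated by all left-normed commutators
`[x_{i1},...,x_{il}]`, `l ≥ 2`, of the free generators. -/
noncomputable def GammaK (K : Type*) [CommRing K] : Subalgebra K (FreeAlg K) :=
  Algebra.adjoin K
    {g | ∃ (i j : ℕ) (rest : List ℕ),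
      g = rest.foldl (fun acc m => br acc (xgen K m)) (br (xgen K i) (xgen K j))}

/-- The multihomogeneous component of multidegree `d` of an element of `K⟨X⟩`:
the part supported on words containing exactly `d i` occurrences of each letter `i`. -/
noncomputable def component (K : Type*) [CommRing K] (d : ℕ → ℕ) (f : FreeAlg K) :
    FreeAlg K :=
  MonoidAlgebra.ofCoeff
    (Finsupp.filter (fun w : FreeMonoid ℕ => ∀ i, (FreeMonoid.toList w).count i = d i) f.coeff)

theorem multihomogeneous_T_ideal_left_generation (K : Type*) [CommRing K]
    (T : TwoSidedIdeal (FreeAlg K))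
    -- `T` is a T-ideal: invariant under all `K`-algebra endomorphisms
    (hTideal : ∀ f : FreeAlg K →ₐ[K] FreeAlg K, ∀ x ∈ T, f x ∈ T)
    -- `T` is multihomogeneous: closed under taking multihomogeneous components
    (hmh : ∀ x ∈ T, ∀ d : ℕ → ℕ, component K d x ∈ T)
    -- `T` is generated as a two-sided ideal by `T ∩ Γ`
    (hgen : ∀ x, x ∈ T ↔
      x ∈ TwoSidedIdeal.span ((T : Set (FreeAlg K)) ∩ (GammaK K : Set (FreeAlg K)))) :
    -- then `T` is generated as a left ideal by `T ∩ Γ`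
    ∀ x, x ∈ T ↔
      x ∈ Ideal.span ((T : Set (FreeAlg K)) ∩ (GammaK K : Set (FreeAlg K))) := by
  classical
  set S : Set (FreeAlg K) := (T : Set (FreeAlg K)) ∩ (GammaK K : Set (FreeAlg K)) with hS
  -- Γ is closed under bracketing with a generator
  have hGamma : ∀ g ∈ GammaK K, ∀ i, br g (xgen K i) ∈ GammaK K := by
    intro g hg
    induction hg using Algebra.adjoin_induction with
    | mem x hx =>
      intro i
      obtain ⟨a, b, rest, rfl⟩ := hx
      refine Algebra.subset_adjoin ⟨a, b, rest ++ [i], ?_⟩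
      simp [List.foldl_append]
    | algebraMap r =>
      intro i
      have h0 : br ((algebraMap K (FreeAlg K)) r) (xgen K i) = 0 := by
        rw [br, Algebra.commutes r (xgen K i), sub_self]
      rw [h0]; exact zero_mem _
    | add x y hx hy ihx ihy =>
      intro i
      have h0 : br (x + y) (xgen K i) = br x (xgen K i) + br y (xgen K i) := by
        simp only [br]; noncomm_ring
      rw [h0]; exact add_mem (ihx i) (ihy i)
    | mul x y hx hy ihx ihy =>
      intro i
      have h0 : br (x * y) (xgen K i) = x * br y (xgen K i) + br x (xgen K i) * y := by
        simp only [br]; noncomm_ring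
      rw [h0]
      exact add_mem (mul_mem hx (ihy i)) (mul_mem (ihx i) hy)
  -- S is closed under bracketing with a generator
  have hSbr : ∀ s ∈ S, ∀ i, br s (xgen K i) ∈ S := by
    rintro s ⟨hsT, hsG⟩ i
    refine ⟨?_, hGamma s hsG i⟩
    exact T.sub_mem (T.mul_mem_right _ _ hsT) (T.mul_mem_left _ _ hsT)
  set I : Ideal (FreeAlg K) := Ideal.span S with hI
  -- the left ideal I is closed under right multiplication by generators
  have hxr : ∀ f ∈ I, ∀ i, f * xgen K i ∈ I := by
    intro f hf
    induction hf using Submodule.span_induction with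
    | mem s hs =>
      intro i
      have h0 : s * xgen K i = xgen K i * s + br s (xgen K i) := by
        simp only [br]; noncomm_ring
      rw [h0]
      exact add_mem (I.mul_mem_left _ (Ideal.subset_span hs))
        (Ideal.subset_span (hSbr s hs i))
    | zero => intro i; simp
    | add x y hx hy ihx ihy =>
      intro i; rw [add_mul]; exact add_mem (ihx i) (ihy i)
    | smul a x hx ihx =>
      intro i; rw [smul_mul_assoc]; exact Submodule.smul_mem _ _ (ihx i)
  -- hence closed under right multiplication by anything
  have hmulr : ∀ b : FreeAlg K, ∀ f ∈ I, f * b ∈ I := by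
    intro b
    induction b using MonoidAlgebra.induction_on with
    | of g =>
      induction g using FreeMonoid.recOn with
      | one =>
        intro f hf
        simp only [map_one, mul_one]
        exact hf
      | of_mul i g ih =>
        intro f hf
        rw [map_mul]
        rw [← mul_assoc]
        exact ih _ (hxr f hf i)
    | add f g hf hg =>
      intro x hx
      rw [mul_add]; exact add_mem (hf x hx) (hg x hx)
    | smul r f hf =>
      intro x hx
      rw [mul_smul_comm, Algebra.smul_def]
      exact I.mul_mem_left _ (hf x hx)
  -- I is a two-sided ideal
  let J : TwoSidedIdeal (FreeAlg K) :=
    TwoSidedIdeal.mk' (I : Set (FreeAlg K)) (zero_mem I)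
      (fun hx hy => add_mem hx hy) (fun hx => neg_mem hx)
      (fun {x y} hy => I.mul_mem_left x hy) (fun {x y} hx => hmulr y x hx)
  have hJ : ∀ z : FreeAlg K, z ∈ J ↔ z ∈ I := by
    intro z
    rw [TwoSidedIdeal.mem_mk']
    exact Iff.rfl
  intro x
  constructor
  · intro hx
    have h1 := (hgen x).1 hx
    rw [TwoSidedIdeal.mem_span_iff] at h1
    exact (hJ x).1 (h1 J (fun s hs => (hJ s).2 (Ideal.subset_span hs)))
  · intro hx
    induction hx using Submodule.span_induction with
    | mem s hs => exact hs.1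
    | zero => exact T.zero_mem
    | add x y hx hy ihx ihy => exact T.add_mem ihx ihy
    | smul a x hx ihx => rw [smul_eq_mul]; exact T.mul_mem_left _ _ ihx
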